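/- Let E be a reproducing kernel Hilbert C*-module over a unital C*-algebra A on a set S with reproducing kernel K, and let s_0 ∈ S be such that K(s_0,s_0) is invertible in A. Then the submodule E_0 = { f ∈ E : f(s_0) = 0 } is a reproducing kernel Hilbert C*-module on S whose reproducing kernel is K_0(s,t) = K(s,t) − K(s,s_0) K(s_0,s_0)^{-1} K(s_0,t). -/

import Mathlib

open scoped RightActions

/-- The notion of Hilbert C⋆-module of the older Mathlib (right `A`-action via `Aᵐᵒᵖ`,
`⟪x, y <• a⟫ = ⟪x, y⟫ * a`); Mathlib's `CStarModule` now uses a left action `[SMul A E]`. -/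
class CStarModuleOld (A : outParam <| Type*) (E : Type*) [NonUnitalSemiring A] [StarRing A]
    [Module ℂ A] [AddCommGroup E] [Module ℂ E] [PartialOrder A] [SMul Aᵐᵒᵖ E] [Norm A] [Norm E]
    extends Inner A E where
  inner_add_right {x} {y} {z} : inner x (y + z) = inner x y + inner x z
  inner_self_nonneg {x} : 0 ≤ inner x x
  inner_self {x} : inner x x = 0 ↔ x = 0
  inner_op_smul_right {a : A} {x y : E} : inner x (y <• a) = inner x y * a
  inner_smul_right_complex {z : ℂ} {x} {y} : inner x (z • y) = z • inner x y
  star_inner x y : star (inner x y) = inner y x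
  norm_eq_sqrt_norm_inner_self x : ‖x‖ = √‖inner x x‖

/-- A *reproducing kernel Hilbert C*-module* (RKHC*M) over the C*-algebra `A` on the set `S`:
a Hilbert C*-module `E` over `A` realized (injectively) as a right `A`-submodule of the
`A`-valued functions on `S` via `toFun`, together with kernel elements `k s` such that
evaluation at `s` is given by `f ↦ ⟪k s, f⟫`, and such that the `A`-linear span of the
`k s` is dense in `E`. -/
structure RKHCM (A : Type*) (S : Type*) (E : Type*)
    [CStarAlgebra A] [PartialOrder A] [StarOrderedRing A]
    [NormedAddCommGroup E] [NormedSpace ℂ E] [SMul Aᵐᵒᵖ E] [CStarModuleOld A E] where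
  toFun : E → S → A
  injective : Function.Injective toFun
  k : S → E
  eval_eq : ∀ (f : E) (s : S), toFun f s = inner A (k s) f
  dense_span : Dense
    ((Submodule.span ℂ (Set.range fun p : S × A => k p.1 <• p.2) : Submodule ℂ E) : Set E)

variable {A : Type*} [CStarAlgebra A] [PartialOrder A] [StarOrderedRing A]
variable {S : Type*} [Nonempty S]
variable {E : Type*} [NormedAddCommGroup E] [NormedSpace ℂ E] [SMul Aᵐᵒᵖ E]
  [CStarModuleOld A E] [CompleteSpace E]

namespace CStarModuleOld

theorem inner_sub_right {x y z : E} : (inner A x (y - z) : A) = inner A x y - inner A x z := by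
  rw [eq_sub_iff_add_eq, ← inner_add_right, sub_add_cancel]

@[simp]
theorem inner_zero_right {x : E} : (inner A x (0 : E) : A) = 0 := by
  have h : (inner A x (0 : E) : A) = inner A x 0 + inner A x 0 := by
    rw [← inner_add_right, add_zero]
  simpa using h

theorem inner_zero_left {x : E} : (inner A (0 : E) x : A) = 0 := by
  rw [← star_inner x (0 : E), inner_zero_right, star_zero]

theorem inner_sub_left {x y z : E} : (inner A (x - y) z : A) = inner A x z - inner A y z := by
  rw [← star_inner z (x - y), inner_sub_right, star_sub, star_inner, star_inner]

theorem inner_op_smul_left {a : A} {x y : E} : (inner A (x <• a) y : A) = star a * inner A x y := by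
  rw [← star_inner y (x <• a), inner_op_smul_right, star_mul, star_inner]

theorem inner_smul_left_complex {z : ℂ} {x y : E} :
    (inner A (z • x) y : A) = star z • inner A x y := by
  rw [← star_inner y (z • x), inner_smul_right_complex, star_smul, star_inner]

theorem inner_smul_right_real {r : ℝ} {x y : E} : (inner A x (r • y) : A) = r • inner A x y := by
  rw [← Complex.coe_smul, inner_smul_right_complex, Complex.coe_smul]

theorem inner_smul_left_real {r : ℝ} {x y : E} : (inner A (r • x) y : A) = r • inner A x y := by
  have hc : star (r : ℂ) = r := Complex.conj_ofReal r
  rw [← Complex.coe_smul, inner_smul_left_complex, hc, Complex.coe_smul]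

theorem norm_sq' (x : E) : ‖x‖ ^ 2 = ‖(inner A x x : A)‖ := by
  rw [norm_eq_sqrt_norm_inner_self x, Real.sq_sqrt (norm_nonneg _)]

theorem inner_mul_inner_swap_le' {x y : E} :
    (inner A y x : A) * inner A x y ≤ ‖x‖ ^ 2 • (inner A y y : A) := by
  rcases eq_or_ne x 0 with h | h
  · rw [h, inner_zero_right, zero_mul, norm_zero]
    simp
  · have hx : 0 < ‖x‖ := norm_pos_iff.mpr h
    have h₁ : ∀ a : A, (0 : A) ≤ ‖x‖ ^ 2 • (star a * a) - ‖x‖ ^ 2 • (star a * inner A x y)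
        - ‖x‖ ^ 2 • (inner A y x * a) + ‖x‖ ^ 2 • (‖x‖ ^ 2 • inner A y y) := fun a => by
      calc (0 : A) ≤ inner A (x <• a - ‖x‖ ^ 2 • y) (x <• a - ‖x‖ ^ 2 • y) := inner_self_nonneg
        _ = star a * inner A x x * a - ‖x‖ ^ 2 • (star a * inner A x y)
              - ‖x‖ ^ 2 • (inner A y x * a) + ‖x‖ ^ 2 • (‖x‖ ^ 2 • inner A y y) := by
            simp only [inner_sub_right, inner_op_smul_right, inner_sub_left, inner_op_smul_left,
              inner_smul_left_real, inner_smul_right_real, mul_smul_comm, smul_mul_assoc,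
              smul_sub, mul_assoc, sub_mul]
            abel
        _ ≤ ‖x‖ ^ 2 • (star a * a) - ‖x‖ ^ 2 • (star a * inner A x y)
              - ‖x‖ ^ 2 • (inner A y x * a) + ‖x‖ ^ 2 • (‖x‖ ^ 2 • inner A y y) := by
            gcongr
            calc star a * inner A x x * a ≤ ‖(inner A x x : A)‖ • (star a * a) :=
                  CStarAlgebra.star_left_conjugate_le_norm_smul (hb := star_inner x x)
              _ = ‖x‖ ^ 2 • (star a * a) := by rw [norm_sq' x]
    specialize h₁ (inner A x y)
    rw [star_inner] at h₁
    simp only [sub_self, zero_sub, le_neg_add_iff_add_le, add_zero] at h₁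
    rwa [smul_le_smul_iff_of_pos_left (pow_pos hx _)] at h₁

theorem norm_inner_le' {x y : E} : ‖(inner A x y : A)‖ ≤ ‖x‖ * ‖y‖ := by
  have := calc ‖(inner A x y : A)‖ ^ 2 = ‖(inner A y x : A) * inner A x y‖ := by
                rw [← star_inner x y, CStarRing.norm_star_mul_self, pow_two]
    _ ≤ ‖‖x‖ ^ 2 • (inner A y y : A)‖ := by
                refine CStarAlgebra.norm_le_norm_of_nonneg_of_le ?_ inner_mul_inner_swap_le'
                rw [← star_inner x y]
                exact star_mul_self_nonneg _
    _ = ‖x‖ ^ 2 * ‖(inner A y y : A)‖ := by simp [norm_smul]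
    _ = ‖x‖ ^ 2 * ‖y‖ ^ 2 := by rw [norm_sq' y]
    _ = (‖x‖ * ‖y‖) ^ 2 := by rw [mul_pow]
  exact (pow_le_pow_iff_left₀ (norm_nonneg _) (by positivity) (by norm_num)).mp this

theorem continuous_inner_right (k : E) : Continuous (fun f : E => (inner A k f : A)) := by
  apply LipschitzWith.continuous (K := ‖k‖₊)
  apply LipschitzWith.of_dist_le_mul
  intro f g
  rw [dist_eq_norm, dist_eq_norm, ← inner_sub_right]
  exact norm_inner_le'

end CStarModuleOld


private lemma ext_inner_left' {u v : E} (h : ∀ y : E, (inner A y u : A) = inner A y v) : u = v := by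
  have h0 : (inner A (u - v) (u - v) : A) = 0 := by
    rw [CStarModuleOld.inner_sub_right, h (u - v), sub_self]
  exact sub_eq_zero.mp (CStarModuleOld.inner_self.mp h0)

private lemma op_smul_add' (x : E) (a b : A) : x <• (a + b) = x <• a + x <• b :=
  ext_inner_left' fun y => by
    simp only [CStarModuleOld.inner_op_smul_right, CStarModuleOld.inner_add_right, mul_add]

private lemma op_smul_sub' (x : E) (a b : A) : x <• (a - b) = x <• a - x <• b :=
  ext_inner_left' fun y => by
    simp only [CStarModuleOld.inner_op_smul_right, CStarModuleOld.inner_sub_right, mul_sub]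

private lemma op_smul_zero' (x : E) : x <• (0 : A) = 0 :=
  ext_inner_left' fun y => by
    simp only [CStarModuleOld.inner_op_smul_right, CStarModuleOld.inner_zero_right, mul_zero]

private lemma sub_op_smul' (x y : E) (a : A) : (x - y) <• a = x <• a - y <• a :=
  ext_inner_left' fun z => by
    simp only [CStarModuleOld.inner_op_smul_right, CStarModuleOld.inner_sub_right, sub_mul]

private lemma op_smul_op_smul' (x : E) (a b : A) : (x <• a) <• b = x <• (a * b) :=
  ext_inner_left' fun y => by
    simp only [CStarModuleOld.inner_op_smul_right, mul_assoc]

private lemma op_smul_comm_smul' (x : E) (c : ℂ) (a : A) : x <• (c • a) = c • (x <• a) :=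
  ext_inner_left' fun y => by
    simp only [CStarModuleOld.inner_op_smul_right, CStarModuleOld.inner_smul_right_complex,
      mul_smul_comm]

private lemma norm_op_smul_le' (x : E) (a : A) : ‖x <• a‖ ≤ ‖x‖ * ‖a‖ := by
  rw [CStarModuleOld.norm_eq_sqrt_norm_inner_self (x := x <• a),
    CStarModuleOld.norm_eq_sqrt_norm_inner_self (x := x),
    CStarModuleOld.inner_op_smul_right, CStarModuleOld.inner_op_smul_left]
  calc √‖star a * (inner A x x : A) * a‖
      ≤ √(‖(inner A x x : A)‖ * (‖a‖ * ‖a‖)) := by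
        apply Real.sqrt_le_sqrt
        calc ‖star a * (inner A x x : A) * a‖ ≤ ‖star a * (inner A x x : A)‖ * ‖a‖ :=
              norm_mul_le _ _
          _ ≤ ‖star a‖ * ‖(inner A x x : A)‖ * ‖a‖ := by
              gcongr; exact norm_mul_le _ _
          _ = ‖(inner A x x : A)‖ * (‖a‖ * ‖a‖) := by rw [norm_star]; ring
    _ = √‖(inner A x x : A)‖ * ‖a‖ := by
        rw [Real.sqrt_mul (norm_nonneg _), Real.sqrt_mul_self (norm_nonneg a)]

private lemma continuous_op_smul' (x : E) : Continuous (fun a : A => x <• a) := by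
  apply LipschitzWith.continuous (K := ‖x‖₊)
  apply LipschitzWith.of_dist_le_mul
  intro a b
  rw [dist_eq_norm, dist_eq_norm, ← op_smul_sub']
  exact norm_op_smul_le' x (a - b)

/-- if `K(s₀,s₀)` is invertible, then `E₀ = {f | f(s₀) = 0}` is a
reproducing kernel Hilbert C*-module on `S` whose kernel element at `s` is
`k₀ s = k s - k s₀ <• (K(s₀,s₀)⁻¹ * K(s₀,s))`: each `k₀ s` lies in `E₀`, evaluation on
`E₀` is reproduced by the `k₀ s`, their `A`-linear span is dense in `E₀`, and the
reproducing kernel is `K₀(s,t) = K(s,t) - K(s,s₀) K(s₀,s₀)⁻¹ K(s₀,t)`. -/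
theorem vanishing_submodule_is_rkhcm_with_reduced_kernel
    (R : RKHCM A S E) (s₀ : S) (hs₀ : IsUnit (inner A (R.k s₀) (R.k s₀) : A))
    (k₀ : S → E)
    (hk₀ : ∀ s, k₀ s = R.k s -
      R.k s₀ <• (Ring.inverse (inner A (R.k s₀) (R.k s₀) : A) * inner A (R.k s₀) (R.k s))) :
    (∀ s, R.toFun (k₀ s) s₀ = 0) ∧
    (∀ f : E, R.toFun f s₀ = 0 → ∀ s, R.toFun f s = inner A (k₀ s) f) ∧
    (∀ s t, (inner A (k₀ s) (k₀ t) : A) =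
      inner A (R.k s) (R.k t) -
        inner A (R.k s) (R.k s₀) * Ring.inverse (inner A (R.k s₀) (R.k s₀) : A) *
          inner A (R.k s₀) (R.k t)) ∧
    closure ((Submodule.span ℂ (Set.range fun p : S × A => k₀ p.1 <• p.2) :
        Submodule ℂ E) : Set E) = {f : E | R.toFun f s₀ = 0} := by
  set q : A := Ring.inverse (inner A (R.k s₀) (R.k s₀) : A) with hq
  -- star of q is q
  have hqstar : star q = q := by
    rw [hq, ← Ring.inverse_star, CStarModuleOld.star_inner]
  -- Part 1, inner product form
  have h1 : ∀ s, (inner A (R.k s₀) (k₀ s) : A) = 0 := by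
    intro s
    rw [hk₀ s, CStarModuleOld.inner_sub_right, CStarModuleOld.inner_op_smul_right, ← mul_assoc,
      Ring.mul_inverse_cancel _ hs₀, one_mul, sub_self]
  -- Part 2, inner product form
  have h2 : ∀ f : E, (inner A (R.k s₀) f : A) = 0 → ∀ s, (inner A (R.k s) f : A) = inner A (k₀ s) f := by
    intro f hf s
    rw [hk₀ s, CStarModuleOld.inner_sub_left, CStarModuleOld.inner_op_smul_left, hf, mul_zero, sub_zero]
  refine ⟨fun s => by rw [R.eval_eq, h1 s], ?_, ?_, ?_⟩
  · intro f hf s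
    rw [R.eval_eq f s₀] at hf
    rw [R.eval_eq f s, h2 f hf s]
  · intro s t
    rw [hk₀ t, CStarModuleOld.inner_sub_right, CStarModuleOld.inner_op_smul_right]
    have hks₀ : (inner A (k₀ s) (R.k s₀) : A) = 0 := by
      rw [← CStarModuleOld.star_inner, h1 s, star_zero]
    rw [hks₀, zero_mul, sub_zero, hk₀ s, CStarModuleOld.inner_sub_left,
      CStarModuleOld.inner_op_smul_left, star_mul, hqstar, CStarModuleOld.star_inner]
  · -- density statement
    set sp₀ : Submodule ℂ E :=
      Submodule.span ℂ (Set.range fun p : S × A => k₀ p.1 <• p.2) with hsp₀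
    set sp : Submodule ℂ E :=
      Submodule.span ℂ (Set.range fun p : S × A => R.k p.1 <• p.2) with hsp
    have hsetV : {f : E | R.toFun f s₀ = 0} = {f : E | (inner A (R.k s₀) f : A) = 0} := by
      ext f; simp only [Set.mem_setOf_eq, R.eval_eq]
    rw [hsetV]
    apply Set.Subset.antisymm
    · -- closure of the span is contained in the kernel of evaluation at s₀
      have hclosed : IsClosed {f : E | (inner A (R.k s₀) f : A) = 0} := by
        have : {f : E | (inner A (R.k s₀) f : A) = 0} =
            (fun f : E => (inner A (R.k s₀) f : A)) ⁻¹' {0} := rfl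
        rw [this]
        exact IsClosed.preimage (CStarModuleOld.continuous_inner_right (R.k s₀))
          isClosed_singleton
      apply closure_minimal _ hclosed
      intro f hf
      induction hf using Submodule.span_induction with
      | mem x hx =>
        obtain ⟨⟨s, a⟩, rfl⟩ := hx
        simp only [Set.mem_setOf_eq, CStarModuleOld.inner_op_smul_right, h1 s, zero_mul]
      | zero => simp
      | add x y _ _ hx hy =>
        simp only [Set.mem_setOf_eq, CStarModuleOld.inner_add_right] at *
        rw [hx, hy, add_zero]
      | smul c x _ hx =>
        simp only [Set.mem_setOf_eq, CStarModuleOld.inner_smul_right_complex] at *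
        rw [hx, smul_zero]
    · -- the kernel of evaluation is contained in the closure of the span
      intro f hf
      simp only [Set.mem_setOf_eq] at hf
      set P : E → E := fun g => g - R.k s₀ <• (q * inner A (R.k s₀) g) with hP
      have hPcont : Continuous P := by
        apply continuous_id.sub
        exact (continuous_op_smul' (R.k s₀)).comp
          (continuous_const.mul (CStarModuleOld.continuous_inner_right (R.k s₀)))
      have hPf : P f = f := by
        rw [hP]; simp only [hf, mul_zero, op_smul_zero', sub_zero]
      have hPmaps : Set.MapsTo P (sp : Set E) (sp₀ : Set E) := by
        intro g hg
        induction hg using Submodule.span_induction with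
        | mem x hx =>
          obtain ⟨⟨s, a⟩, rfl⟩ := hx
          have : P (R.k s <• a) = k₀ s <• a := by
            rw [hP]
            simp only [CStarModuleOld.inner_op_smul_right]
            rw [← mul_assoc, ← op_smul_op_smul', hk₀ s, sub_op_smul']
          rw [this]
          exact Submodule.subset_span ⟨(s, a), rfl⟩
        | zero =>
          have : P 0 = 0 := by
            simp only [hP, CStarModuleOld.inner_zero_right, mul_zero, op_smul_zero', sub_zero]
          rw [this]; exact (sp₀ : Submodule ℂ E).zero_mem
        | add x y _ _ hx hy =>
          have : P (x + y) = P x + P y := by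
            rw [hP]
            simp only [CStarModuleOld.inner_add_right, mul_add, op_smul_add']
            abel
          rw [this]; exact sp₀.add_mem hx hy
        | smul c x _ hx =>
          have : P (c • x) = c • P x := by
            rw [hP]
            simp only [CStarModuleOld.inner_smul_right_complex, mul_smul_comm,
              op_smul_comm_smul', smul_sub]
          rw [this]; exact sp₀.smul_mem c hx
      have hfc : f ∈ closure (sp : Set E) := R.dense_span f
      have := map_mem_closure hPcont hfc hPmaps
      rwa [hPf] at this
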